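/- arXiv:math/0612468 — 2 statements merged into one kernel-verified Lean document; each statement's English description precedes it below -/
import Mathlib

section
/- The collinearity graph of 𝕊 is connected and has diameter 3. -/
/- Common setup: the generalized quadrangle of order (2,2) on the edges of a
   6-element set, the near hexagon 𝓢 = ℍ₃, and the near hexagon 𝕊 = DSp(6,2). -/

/-- An edge: a 2-element subset of `Fin 6`. -/
abbrev Edge : Type := {e : Finset (Fin 6) // e.card = 2}

/-- `perp A` is `A^⊥`: the set of edges equal to or disjoint from every element of `A`. -/
def perp (A : Set Edge) : Set Edge := {y | ∀ x ∈ A, x = y ∨ Disjoint x.1 y.1}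

/-- A factor: a set of three pairwise disjoint edges (a perfect matching of `Fin 6`). -/
def IsFactor (T : Set Edge) : Prop :=
  T.ncard = 3 ∧ T.Pairwise (fun x y => Disjoint x.1 y.1)

/-- A triad: a set of three pairwise non-collinear (i.e. pairwise intersecting) distinct
    edges. -/
def IsTriad (T : Set Edge) : Prop :=
  T.ncard = 3 ∧ T.Pairwise (fun x y => ¬ Disjoint x.1 y.1)

/-- A complete triad: a triad not contained in a set of four pairwise non-collinear edges. -/
def IsCompleteTriad (T : Set Edge) : Prop :=
  IsTriad T ∧
    ¬ ∃ U : Set Edge, T ⊆ U ∧ U.ncard = 4 ∧ U.Pairwise (fun x y => ¬ Disjoint x.1 y.1)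

/-- The point set 𝓟 of 𝓢 : pairs `(x,u)` of edges with `x = u` or `x ∩ u = ∅`. -/
def NPoint : Type := {p : Edge × Edge // p.1 = p.2 ∨ Disjoint p.1.1 p.2.1}

/-- The lines 𝓛 of 𝓢 : sets `{(x, σ x) : x ∈ T}` where `T` is a factor or a complete
    triad and `σ : T → T^⊥` is a bijection. -/
def IsLine (L : Set NPoint) : Prop :=
  ∃ (T : Set Edge) (σ : Edge → Edge),
    (IsFactor T ∨ IsCompleteTriad T) ∧ Set.BijOn σ T (perp T) ∧
    L = {p : NPoint | p.1.1 ∈ T ∧ p.1.2 = σ p.1.1}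

/-- The collinearity graph of 𝓢. -/
def NG : SimpleGraph NPoint where
  Adj α β := α ≠ β ∧ ∃ L, IsLine L ∧ α ∈ L ∧ β ∈ L
  symm := ⟨fun _ _ ⟨h, L, hL, ha, hb⟩ => ⟨h.symm, L, hL, hb, ha⟩⟩
  loopless := ⟨fun _ h => h.1 rfl⟩

/-- The point set ℙ of 𝕊 : the disjoint union 𝓟 ⊔ P ⊔ P' where `P` and `P'` are two
    copies of the edge set. -/
def BPoint : Type := NPoint ⊕ Edge ⊕ Edge

/-- Embedding of 𝓟 into ℙ. -/
def inS (p : NPoint) : BPoint := Sum.inl p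

/-- Embedding of the first copy `P` of the edge set into ℙ (an edge `x` gives `x ∈ P`). -/
def inP (x : Edge) : BPoint := Sum.inr (Sum.inl x)

/-- Embedding of the second copy `P'` of the edge set into ℙ (an edge `u` gives `u' ∈ P'`). -/
def inP' (u : Edge) : BPoint := Sum.inr (Sum.inr u)

/-- The lines 𝕃 of 𝕊 : the lines of 𝓛 together with the lines `{x, (x,u), u'}`
    for `(x,u) ∈ 𝓟` (the latter being the lines of type `𝕃₁`). -/
def IsBLine (L : Set BPoint) : Prop :=
  (∃ L₀ : Set NPoint, IsLine L₀ ∧ L = inS '' L₀) ∨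
  (∃ p : NPoint, L = {inP p.1.1, inS p, inP' p.1.2})

/-- The collinearity graph of 𝕊. -/
def BG : SimpleGraph BPoint where
  Adj α β := α ≠ β ∧ ∃ L, IsBLine L ∧ α ∈ L ∧ β ∈ L
  symm := ⟨fun _ _ ⟨h, L, hL, ha, hb⟩ => ⟨h.symm, L, hL, hb, ha⟩⟩
  loopless := ⟨fun _ h => h.1 rfl⟩

/-! ### Basic helpers -/

/-- Compatibility of edges: equal or disjoint. -/
def Compat (x u : Edge) : Prop := x = u ∨ Disjoint x.1 u.1

lemma Compat.refl (x : Edge) : Compat x x := Or.inl rfl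

lemma Compat.symm {x u : Edge} (h : Compat x u) : Compat u x :=
  h.imp Eq.symm (fun d => d.symm)

/-- Build an `NPoint`. -/
def mkN (x u : Edge) (h : Compat x u) : NPoint := ⟨(x,u), h⟩

lemma inS_ne_inP (p : NPoint) (x : Edge) : inS p ≠ inP x := by intro h; exact Sum.inl_ne_inr h
lemma inS_ne_inP' (p : NPoint) (x : Edge) : inS p ≠ inP' x := by intro h; exact Sum.inl_ne_inr h
lemma inP_ne_inP' (x u : Edge) : inP x ≠ inP' u := fun h => Sum.inl_ne_inr (Sum.inr.inj h)
lemma inS_inj {p q : NPoint} (h : inS p = inS q) : p = q :=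
  Sum.inl.inj h
lemma inP_inj {x y : Edge} (h : inP x = inP y) : x = y :=
  Sum.inl.inj (Sum.inr.inj h)
lemma inP'_inj {x y : Edge} (h : inP' x = inP' y) : x = y :=
  Sum.inr.inj (Sum.inr.inj h)

/-- The type `𝕃₁` line attached to an `NPoint`. -/
def L1 (p : NPoint) : Set BPoint := {inP p.1.1, inS p, inP' p.1.2}

lemma isBLine_L1 (p : NPoint) : IsBLine (L1 p) := Or.inr ⟨p, rfl⟩

lemma adj_inP_inS (p : NPoint) : BG.Adj (inP p.1.1) (inS p) :=
  ⟨(inS_ne_inP p _).symm, L1 p, isBLine_L1 p, by simp [L1], by simp [L1]⟩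

lemma adj_inS_inP' (p : NPoint) : BG.Adj (inS p) (inP' p.1.2) :=
  ⟨inS_ne_inP' p _, L1 p, isBLine_L1 p, by simp [L1], by simp [L1]⟩

lemma adj_inP_inP' (p : NPoint) : BG.Adj (inP p.1.1) (inP' p.1.2) :=
  ⟨inP_ne_inP' _ _, L1 p, isBLine_L1 p, by simp [L1], by simp [L1]⟩

/-- Any neighbour of `inP x` is `inS q` or `inP' q.1.2` for a point `q` with `q.1.1 = x`. -/
lemma adj_inP_char {x : Edge} {β : BPoint} (h : BG.Adj (inP x) β) :
    ∃ q : NPoint, q.1.1 = x ∧ (β = inS q ∨ β = inP' q.1.2) := by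
  obtain ⟨hne, L, hL, hx, hb⟩ := h
  rcases hL with ⟨L₀, -, rfl⟩ | ⟨q, rfl⟩
  · obtain ⟨p, -, hp⟩ := hx
    exact absurd hp (inS_ne_inP p x)
  · simp only [Set.mem_insert_iff, Set.mem_singleton_iff] at hx hb
    have hq : q.1.1 = x := by
      rcases hx with h1 | h1 | h1
      · exact inP_inj h1.symm
      · exact absurd h1 (inS_ne_inP q x).symm
      · exact absurd h1 (inP_ne_inP' _ _)
    rcases hb with h1 | h1 | h1
    · exact absurd (h1.trans (congrArg inP hq)) (Ne.symm hne)
    · exact ⟨q, hq, Or.inl h1⟩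
    · exact ⟨q, hq, Or.inr h1⟩

/-- Any neighbour of `inP' u` is `inS q` or `inP q.1.1` for a point `q` with `q.1.2 = u`. -/
lemma adj_inP'_char {u : Edge} {β : BPoint} (h : BG.Adj (inP' u) β) :
    ∃ q : NPoint, q.1.2 = u ∧ (β = inS q ∨ β = inP q.1.1) := by
  obtain ⟨hne, L, hL, hx, hb⟩ := h
  rcases hL with ⟨L₀, -, rfl⟩ | ⟨q, rfl⟩
  · obtain ⟨p, -, hp⟩ := hx
    exact absurd hp (inS_ne_inP' p u)
  · simp only [Set.mem_insert_iff, Set.mem_singleton_iff] at hx hb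
    have hq : q.1.2 = u := by
      rcases hx with h1 | h1 | h1
      · exact absurd h1 (inP_ne_inP' _ _).symm
      · exact absurd h1 (inS_ne_inP' q u).symm
      · exact inP'_inj h1.symm
    rcases hb with h1 | h1 | h1
    · exact ⟨q, hq, Or.inr h1⟩
    · exact ⟨q, hq, Or.inl h1⟩
    · exact absurd (h1.trans (congrArg inP' hq)) (Ne.symm hne)
/-! ### Finset combinatorics on `Fin 6` -/

lemma edge_eq_of_subset {x y : Edge} (h : x.1 ⊆ y.1) : x = y :=
  Subtype.ext (Finset.eq_of_subset_of_card_le h (by rw [x.2, y.2]))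

lemma exists_edge_subset {s : Finset (Fin 6)} (h : 2 ≤ s.card) : ∃ z : Edge, z.1 ⊆ s := by
  obtain ⟨t, hts, htc⟩ := Finset.exists_subset_card_eq h
  exact ⟨⟨t, htc⟩, hts⟩

lemma exists_disjoint_edge {s : Finset (Fin 6)} (h : s.card ≤ 4) :
    ∃ z : Edge, Disjoint z.1 s := by
  have hc : 2 ≤ (Finset.univ \ s).card := by
    rw [Finset.card_sdiff_of_subset (Finset.subset_univ s)]
    simp only [Finset.card_univ, Fintype.card_fin]
    omega
  obtain ⟨z, hz⟩ := exists_edge_subset hc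
  exact ⟨z, Finset.disjoint_left.2 fun a ha => (Finset.mem_sdiff.1 (hz ha)).2⟩

/-- A common compatible (in fact disjoint) edge for any two edges. -/
lemma exists_compat_pair (x y : Edge) :
    ∃ z : Edge, Disjoint x.1 z.1 ∧ Disjoint y.1 z.1 := by
  have h : (x.1 ∪ y.1).card ≤ 4 := by
    have := Finset.card_union_le x.1 y.1
    rw [x.2, y.2] at this; omega
  obtain ⟨z, hz⟩ := exists_disjoint_edge h
  obtain ⟨h1, h2⟩ := Finset.disjoint_union_right.1 hz
  exact ⟨z, h1.symm, h2.symm⟩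

/-- The complementary edge of two disjoint edges. -/
lemma comp_edge {x y : Edge} (hxy : Disjoint x.1 y.1) :
    ∃ t : Edge, t.1 = Finset.univ \ (x.1 ∪ y.1) := by
  refine ⟨⟨Finset.univ \ (x.1 ∪ y.1), ?_⟩, rfl⟩
  rw [Finset.card_sdiff_of_subset (Finset.subset_univ _), Finset.card_union_of_disjoint hxy, x.2, y.2]
  simp

lemma union_card_three {x y : Edge} (hxy : x ≠ y) (hnd : ¬ Disjoint x.1 y.1) :
    (x.1 ∪ y.1).card = 3 := by
  have hint : (x.1 ∩ y.1).card = 1 := by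
    have h1 : 1 ≤ (x.1 ∩ y.1).card := by
      rw [Finset.not_disjoint_iff_nonempty_inter] at hnd
      exact Finset.card_pos.2 hnd
    by_contra h
    have h2 : 2 ≤ (x.1 ∩ y.1).card := by omega
    have hx2 : x.1.card ≤ (x.1 ∩ y.1).card := by rw [x.2]; exact h2
    have : x.1 = x.1 ∩ y.1 :=
      (Finset.eq_of_subset_of_card_le Finset.inter_subset_left hx2).symm
    exact hxy (edge_eq_of_subset (by rw [this]; exact Finset.inter_subset_right))
  have := Finset.card_union_add_card_inter x.1 y.1
  rw [x.2, y.2, hint] at this; omega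

/-- A 2-subset of a 3-set is one of `u`, `v`, or `D \ (u ∩ v)`, given distinct
    2-subsets `u v` of `D`. -/
lemma third_in_three {D : Finset (Fin 6)} (hD : D.card = 3) {u v : Edge}
    (hu : u.1 ⊆ D) (hv : v.1 ⊆ D) (huv : u ≠ v) :
    (D \ (u.1 ∩ v.1)).card = 2 ∧
    ∀ w : Edge, w.1 ⊆ D → w.1 = u.1 ∨ w.1 = v.1 ∨ w.1 = D \ (u.1 ∩ v.1) := by
  have hint : (u.1 ∩ v.1).card = 1 := by
    have h1 : 1 ≤ (u.1 ∩ v.1).card := by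
      have := Finset.card_union_add_card_inter u.1 v.1
      have hle : (u.1 ∪ v.1).card ≤ 3 := hD ▸ Finset.card_le_card (Finset.union_subset hu hv)
      rw [u.2, v.2] at this; omega
    by_contra h
    have h2 : 2 ≤ (u.1 ∩ v.1).card := by omega
    have hx2 : u.1.card ≤ (u.1 ∩ v.1).card := by rw [u.2]; exact h2
    have : u.1 = u.1 ∩ v.1 :=
      (Finset.eq_of_subset_of_card_le Finset.inter_subset_left hx2).symm
    exact huv (edge_eq_of_subset (show u.1 ⊆ v.1 by rw [this]; exact Finset.inter_subset_right))
  have hsub : u.1 ∩ v.1 ⊆ D := fun a ha => hu (Finset.mem_inter.1 ha).1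
  constructor
  · rw [Finset.card_sdiff_of_subset hsub, hD, hint]
  · intro w hw
    obtain ⟨m, hm⟩ := Finset.card_eq_one.1 (show (D \ w.1).card = 1 by
      rw [Finset.card_sdiff_of_subset hw, hD, w.2])
    have hwm : w.1 = D \ {m} := by
      rw [← hm, Finset.sdiff_sdiff_eq_self hw]
    have hmD : m ∈ D := (Finset.mem_sdiff.1 (hm ▸ Finset.mem_singleton_self m)).1
    by_cases hmu : m ∈ u.1
    · by_cases hmv : m ∈ v.1
      · right; right
        have : u.1 ∩ v.1 = {m} := Finset.eq_of_subset_of_card_le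
          (Finset.singleton_subset_iff.2 (Finset.mem_inter.2 ⟨hmu, hmv⟩)) (by rw [hint, Finset.card_singleton]) |>.symm
        rw [hwm, this]
      · right; left
        have hvs : v.1 ⊆ D \ {m} := Finset.subset_sdiff.2
          ⟨hv, Finset.disjoint_singleton_right.2 hmv⟩
        have hcd : (D \ {m}).card ≤ v.1.card := by
          rw [Finset.card_sdiff_of_subset (Finset.singleton_subset_iff.2 hmD), hD, v.2,
            Finset.card_singleton]
        rw [hwm, ← Finset.eq_of_subset_of_card_le hvs hcd]
    · left
      have hus : u.1 ⊆ D \ {m} := Finset.subset_sdiff.2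
        ⟨hu, Finset.disjoint_singleton_right.2 hmu⟩
      have hcd : (D \ {m}).card ≤ u.1.card := by
        rw [Finset.card_sdiff_of_subset (Finset.singleton_subset_iff.2 hmD), hD, u.2,
          Finset.card_singleton]
      rw [hwm, ← Finset.eq_of_subset_of_card_le hus hcd]

/-- Given a perfect matching `x, y, t` and any edge `z`, some matching edge avoids `z`. -/
lemma avoid_matching {x y t z : Edge} (hxy : Disjoint x.1 y.1) (hxt : Disjoint x.1 t.1)
    (hyt : Disjoint y.1 t.1) (huniv : x.1 ∪ y.1 ∪ t.1 = Finset.univ) :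
    Disjoint x.1 z.1 ∨ Disjoint y.1 z.1 ∨ Disjoint t.1 z.1 := by
  by_contra h
  push_neg at h
  obtain ⟨h1, h2, h3⟩ := h
  rw [Finset.not_disjoint_iff_nonempty_inter] at h1 h2 h3
  have hsub : (x.1 ∩ z.1) ∪ (y.1 ∩ z.1) ∪ (t.1 ∩ z.1) ⊆ z.1 := by
    intro a ha
    rcases Finset.mem_union.1 ha with h | h
    · rcases Finset.mem_union.1 h with h | h
      · exact (Finset.mem_inter.1 h).2
      · exact (Finset.mem_inter.1 h).2
    · exact (Finset.mem_inter.1 h).2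
  have hd1 : Disjoint (x.1 ∩ z.1) (y.1 ∩ z.1) :=
    hxy.mono Finset.inter_subset_left Finset.inter_subset_left
  have hd2 : Disjoint ((x.1 ∩ z.1) ∪ (y.1 ∩ z.1)) (t.1 ∩ z.1) := by
    rw [Finset.disjoint_union_left]
    exact ⟨hxt.mono Finset.inter_subset_left Finset.inter_subset_left,
      hyt.mono Finset.inter_subset_left Finset.inter_subset_left⟩
  have hcard : 3 ≤ ((x.1 ∩ z.1) ∪ (y.1 ∩ z.1) ∪ (t.1 ∩ z.1)).card := by
    rw [Finset.card_union_of_disjoint hd2, Finset.card_union_of_disjoint hd1]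
    have c1 := Finset.card_pos.2 h1
    have c2 := Finset.card_pos.2 h2
    have c3 := Finset.card_pos.2 h3
    omega
  have := Finset.card_le_card hsub
  rw [z.2] at this; omega

/-- Membership in a matching from compatibility with all three parts. -/
lemma mem_matching {x y t u : Edge} (hxy : Disjoint x.1 y.1)
    (huniv : x.1 ∪ y.1 ∪ t.1 = Finset.univ)
    (hxu : Compat x u) (hyu : Compat y u) : u = x ∨ u = y ∨ u = t := by
  rcases hxu with rfl | hxu
  · exact Or.inl rfl
  rcases hyu with rfl | hyu
  · exact Or.inr (Or.inl rfl)
  right; right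
  refine edge_eq_of_subset (fun a ha => ?_)
  have : a ∈ x.1 ∪ y.1 ∪ t.1 := huniv ▸ Finset.mem_univ a
  rcases Finset.mem_union.1 this with h | h
  · rcases Finset.mem_union.1 h with h | h
    · exact absurd ha (Finset.disjoint_left.1 hxu h)
    · exact absurd ha (Finset.disjoint_left.1 hyu h)
  · exact h
/-! ### Line constructions -/

lemma edge_nonempty (x : Edge) : x.1.Nonempty := Finset.card_pos.1 (by rw [x.2]; omega)

lemma edge_ne_of_disjoint {a b : Edge} (h : Disjoint a.1 b.1) : a ≠ b := by
  intro heq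
  have h2 : Disjoint b.1 b.1 := heq ▸ h
  have h0 : b.1 = ∅ := by simpa using disjoint_self.1 h2
  exact absurd h0 (Finset.nonempty_iff_ne_empty.1 (edge_nonempty b))

lemma mem_perp_triple {a b c y : Edge} :
    y ∈ perp {a, b, c} ↔ Compat a y ∧ Compat b y ∧ Compat c y := by
  simp [perp, Compat, Set.mem_setOf_eq, or_imp, forall_and, Set.mem_insert_iff]

lemma three_perm {α : Type*} {a b c u v : α} (hab : a ≠ b) (hac : a ≠ c) (hbc : b ≠ c)
    (hu : u = a ∨ u = b ∨ u = c) (hv : v = a ∨ v = b ∨ v = c) (huv : u ≠ v) :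
    ∃ r, ({u, v, r} : Set α) = {a, b, c} ∧ u ≠ r ∧ v ≠ r := by
  rcases hu with hu | hu | hu <;> rcases hv with hv | hv | hv
  · exact absurd (hu.trans hv.symm) huv
  · exact ⟨c, by rw [hu, hv], by rw [hu]; exact hac, by rw [hv]; exact hbc⟩
  · exact ⟨b, by rw [hu, hv]; ext e; simp; tauto, by rw [hu]; exact hab,
      by rw [hv]; exact Ne.symm hbc⟩
  · exact ⟨c, by rw [hu, hv]; ext e; simp; tauto, by rw [hu]; exact hbc,
      by rw [hv]; exact hac⟩
  · exact absurd (hu.trans hv.symm) huv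
  · exact ⟨a, by rw [hu, hv]; ext e; simp; tauto, by rw [hu]; exact Ne.symm hab,
      by rw [hv]; exact Ne.symm hac⟩
  · exact ⟨b, by rw [hu, hv]; ext e; simp; tauto, by rw [hu]; exact Ne.symm hbc,
      by rw [hv]; exact hab⟩
  · exact ⟨a, by rw [hu, hv]; ext e; simp; tauto, by rw [hu]; exact Ne.symm hac,
      by rw [hv]; exact Ne.symm hab⟩
  · exact absurd (hu.trans hv.symm) huv

lemma bijOn_ite {α : Type*} [DecidableEq α] {a b c u v r : α}
    (hab : a ≠ b) (hac : a ≠ c) (hbc : b ≠ c) (huv : u ≠ v) (hur : u ≠ r) (hvr : v ≠ r) :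
    Set.BijOn (fun e => if e = a then u else if e = b then v else r)
      {a, b, c} {u, v, r} := by
  refine ⟨?_, ?_, ?_⟩
  · rintro e (rfl | rfl | rfl) <;>
      simp [Ne.symm hab, Ne.symm hac, Ne.symm hbc]
  · rintro e (rfl | rfl | rfl) f (rfl | rfl | rfl) h <;>
      simp [Ne.symm hab, Ne.symm hac, Ne.symm hbc] at h ⊢ <;> simp_all
  · rintro e (rfl | rfl | rfl)
    · exact ⟨a, by simp, by simp⟩
    · exact ⟨b, by simp, by simp [Ne.symm hab]⟩
    · exact ⟨c, by simp, by simp [Ne.symm hac, Ne.symm hbc]⟩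

/-- The key adjacency construction in `𝓢`: two points `(x,u)` and `(z,w)` with
`x ≠ z`, `u ≠ w`, and `u, w` both compatible with both `x` and `z`, are collinear. -/
lemma adjNG {x u z w : Edge} (hxz : x ≠ z) (huw : u ≠ w)
    (hxu : Compat x u) (hzu : Compat z u) (hxw : Compat x w) (hzw : Compat z w) :
    BG.Adj (inS ⟨(x, u), hxu⟩) (inS ⟨(z, w), hzw⟩) := by
  have hne : inS (⟨(x, u), hxu⟩ : NPoint) ≠ inS ⟨(z, w), hzw⟩ := by
    intro h
    exact hxz (congrArg (fun p : NPoint => p.1.1) (inS_inj h))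
  by_cases hd : Disjoint x.1 z.1
  · -- factor case
    obtain ⟨t, ht⟩ := comp_edge hd
    have huniv : x.1 ∪ z.1 ∪ t.1 = Finset.univ := by
      rw [ht]; exact Finset.union_sdiff_of_subset (Finset.subset_univ _)
    have hxt : Disjoint x.1 t.1 := by
      rw [ht]
      exact Finset.disjoint_left.2 fun a ha h2 =>
        (Finset.mem_sdiff.1 h2).2 (Finset.mem_union_left _ ha)
    have hzt : Disjoint z.1 t.1 := by
      rw [ht]
      exact Finset.disjoint_left.2 fun a ha h2 =>
        (Finset.mem_sdiff.1 h2).2 (Finset.mem_union_right _ ha)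
    have hxt' : x ≠ t := edge_ne_of_disjoint hxt
    have hzt' : z ≠ t := edge_ne_of_disjoint hzt
    have hu3 : u = x ∨ u = z ∨ u = t := mem_matching hd huniv hxu hzu
    have hw3 : w = x ∨ w = z ∨ w = t := mem_matching hd huniv hxw hzw
    obtain ⟨r, hperm, hur, hwr⟩ := three_perm hxz hxt' hzt' hu3 hw3 huw
    have hperp : perp {x, z, t} = ({x, z, t} : Set Edge) := by
      ext y
      rw [mem_perp_triple]
      constructor
      · rintro ⟨h1, h2, -⟩
        rcases mem_matching hd huniv h1 h2 with rfl | rfl | rfl <;> simp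
      · rintro (rfl | rfl | rfl)
        · exact ⟨Compat.refl _, Or.inr hd.symm, Or.inr hxt.symm⟩
        · exact ⟨Or.inr hd, Compat.refl _, Or.inr hzt.symm⟩
        · exact ⟨Or.inr hxt, Or.inr hzt, Compat.refl _⟩
    have hfactor : IsFactor ({x, z, t} : Set Edge) := by
      constructor
      · exact Set.ncard_eq_three.2 ⟨x, z, t, hxz, hxt', hzt', rfl⟩
      · rintro a (rfl | rfl | rfl) b (rfl | rfl | rfl) hne2 <;>
          first
            | exact absurd rfl hne2
            | exact hd | exact hxt | exact hzt
            | exact hd.symm | exact hxt.symm | exact hzt.symm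
    set σ : Edge → Edge := fun e => if e = x then u else if e = z then w else r with hσ
    have hbij : Set.BijOn σ ({x, z, t} : Set Edge) (perp {x, z, t}) := by
      rw [hperp]
      have hb := bijOn_ite (a := x) (b := z) (c := t) hxz hxt' hzt' huw hur hwr
      rwa [hperm] at hb
    refine ⟨hne, inS '' {p : NPoint | p.1.1 ∈ ({x, z, t} : Set Edge) ∧ p.1.2 = σ p.1.1},
      Or.inl ⟨_, ⟨{x, z, t}, σ, Or.inl hfactor, hbij, rfl⟩, rfl⟩, ?_, ?_⟩
    · exact Set.mem_image_of_mem _ ⟨by simp, by simp [hσ]⟩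
    · exact Set.mem_image_of_mem _ ⟨by simp, by simp [hσ, Ne.symm hxz]⟩
  · -- complete triad case
    have hA : (x.1 ∪ z.1).card = 3 := union_card_three hxz hd
    have hD : ((Finset.univ : Finset (Fin 6)) \ (x.1 ∪ z.1)).card = 3 := by
      rw [Finset.card_sdiff_of_subset (Finset.subset_univ _), hA]; simp
    set A := x.1 ∪ z.1 with hAdef
    set D := (Finset.univ : Finset (Fin 6)) \ A with hDdef
    -- the third edge of the triangle
    have hxA : x.1 ⊆ A := Finset.subset_union_left
    have hzA : z.1 ⊆ A := Finset.subset_union_right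
    obtain ⟨he3card, hthirdA⟩ := third_in_three hA hxA hzA hxz
    set e3 : Edge := ⟨A \ (x.1 ∩ z.1), he3card⟩ with he3
    -- u and w lie in D
    have hudx : Disjoint x.1 u.1 := by
      rcases hxu with rfl | h
      · rcases hzu with h | h
        · first | exact absurd h.symm hxz | exact absurd h hxz
        · first | exact absurd h hd | exact absurd h.symm hd
      · exact h
    have hudz : Disjoint z.1 u.1 := by
      rcases hzu with rfl | h
      · rcases hxu with h | h
        · first | exact absurd h hxz | exact absurd h.symm hxz
        · first | exact absurd h hd | exact absurd h.symm hd
      · exact h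
    have hwdx : Disjoint x.1 w.1 := by
      rcases hxw with rfl | h
      · rcases hzw with h | h
        · first | exact absurd h.symm hxz | exact absurd h hxz
        · first | exact absurd h hd | exact absurd h.symm hd
      · exact h
    have hwdz : Disjoint z.1 w.1 := by
      rcases hzw with rfl | h
      · rcases hxw with h | h
        · first | exact absurd h hxz | exact absurd h.symm hxz
        · first | exact absurd h hd | exact absurd h.symm hd
      · exact h
    have hsubD : ∀ {g : Edge}, Disjoint x.1 g.1 → Disjoint z.1 g.1 → g.1 ⊆ D := by
      intro g h1 h2
      intro a ha
      rw [hDdef, Finset.mem_sdiff]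
      refine ⟨Finset.mem_univ a, fun hmem => ?_⟩
      rcases Finset.mem_union.1 hmem with h | h
      · exact Finset.disjoint_left.1 h1 h ha
      · exact Finset.disjoint_left.1 h2 h ha
    have huD : u.1 ⊆ D := hsubD hudx hudz
    have hwD : w.1 ⊆ D := hsubD hwdx hwdz
    obtain ⟨hrcard, hthirdD⟩ := third_in_three hD huD hwD huw
    set r : Edge := ⟨D \ (u.1 ∩ w.1), hrcard⟩ with hr
    -- distinctness
    have hxz_inter : (x.1 ∩ z.1).Nonempty := Finset.not_disjoint_iff_nonempty_inter.1 hd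
    have hxe3 : x ≠ e3 := by
      obtain ⟨a, ha⟩ := hxz_inter
      intro h
      have : a ∈ e3.1 := h ▸ (Finset.mem_inter.1 ha).1
      exact (Finset.mem_sdiff.1 this).2 ha
    have hze3 : z ≠ e3 := by
      obtain ⟨a, ha⟩ := hxz_inter
      intro h
      have : a ∈ e3.1 := h ▸ (Finset.mem_inter.1 ha).2
      exact (Finset.mem_sdiff.1 this).2 ha
    have huw_inter : (u.1 ∩ w.1).Nonempty := by
      rw [← Finset.not_disjoint_iff_nonempty_inter]
      intro hdis
      have hcard : (u.1 ∪ w.1).card = 4 := by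
        rw [Finset.card_union_of_disjoint hdis, u.2, w.2]
      have := Finset.card_le_card (Finset.union_subset huD hwD)
      rw [hcard, hD] at this; omega
    have hur : u ≠ r := by
      obtain ⟨a, ha⟩ := huw_inter
      intro h
      have : a ∈ r.1 := h ▸ (Finset.mem_inter.1 ha).1
      exact (Finset.mem_sdiff.1 this).2 ha
    have hwr : w ≠ r := by
      obtain ⟨a, ha⟩ := huw_inter
      intro h
      have : a ∈ r.1 := h ▸ (Finset.mem_inter.1 ha).2
      exact (Finset.mem_sdiff.1 this).2 ha
    -- pairwise non-disjointness of the triad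
    have hxdiff : (x.1 \ z.1).Nonempty := by
      rw [Finset.sdiff_nonempty]
      intro hsub
      exact hxz (edge_eq_of_subset hsub)
    have hzdiff : (z.1 \ x.1).Nonempty := by
      rw [Finset.sdiff_nonempty]
      intro hsub
      exact hxz (edge_eq_of_subset hsub).symm
    have hnd_xe3 : ¬ Disjoint x.1 e3.1 := by
      obtain ⟨a, ha⟩ := hxdiff
      rw [Finset.mem_sdiff] at ha
      rw [Finset.not_disjoint_iff]
      refine ⟨a, ha.1, ?_⟩
      rw [he3]
      exact Finset.mem_sdiff.2 ⟨hxA ha.1, fun hm => ha.2 (Finset.mem_inter.1 hm).2⟩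
    have hnd_ze3 : ¬ Disjoint z.1 e3.1 := by
      obtain ⟨a, ha⟩ := hzdiff
      rw [Finset.mem_sdiff] at ha
      rw [Finset.not_disjoint_iff]
      refine ⟨a, ha.1, ?_⟩
      rw [he3]
      exact Finset.mem_sdiff.2 ⟨hzA ha.1, fun hm => ha.2 (Finset.mem_inter.1 hm).1⟩
    have he3A : e3.1 ⊆ A := Finset.sdiff_subset
    -- edges contained in A are x, z or e3
    have hginA : ∀ g : Edge, g.1 ⊆ A → g = x ∨ g = z ∨ g = e3 := by
      intro g hg
      rcases hthirdA g hg with h | h | h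
      · exact Or.inl (Subtype.ext h)
      · exact Or.inr (Or.inl (Subtype.ext h))
      · exact Or.inr (Or.inr (Subtype.ext h))
    -- the triad is complete
    have htriad : IsCompleteTriad ({x, z, e3} : Set Edge) := by
      constructor
      · constructor
        · exact Set.ncard_eq_three.2 ⟨x, z, e3, hxz, hxe3, hze3, rfl⟩
        · rintro a (rfl | rfl | rfl) b (rfl | rfl | rfl) hne2 <;>
            first
              | exact absurd rfl hne2
              | exact hd | exact hnd_xe3 | exact hnd_ze3
              | exact fun h => hd h.symm
              | exact fun h => hnd_xe3 h.symm
              | exact fun h => hnd_ze3 h.symm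
      · rintro ⟨U, hTU, hU4, hUp⟩
        have hTn : ({x, z, e3} : Set Edge).ncard = 3 :=
          Set.ncard_eq_three.2 ⟨x, z, e3, hxz, hxe3, hze3, rfl⟩
        have hssub : ({x, z, e3} : Set Edge) ⊂ U := by
          refine ⟨hTU, fun h => ?_⟩
          have h4 := hU4
          rw [← Set.eq_of_subset_of_subset hTU h, hTn] at h4
          exact absurd h4 (by omega)
        obtain ⟨g, hgU, hgT⟩ := Set.exists_of_ssubset hssub
        have hgx : g ≠ x := fun h => hgT (h ▸ by simp)
        have hgz : g ≠ z := fun h => hgT (h ▸ by simp)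
        have hge3 : g ≠ e3 := fun h => hgT (h ▸ by simp)
        have hnd1 : ¬ Disjoint g.1 x.1 := hUp hgU (hTU (by simp)) hgx
        have hnd2 : ¬ Disjoint g.1 z.1 := hUp hgU (hTU (by simp)) hgz
        have hnd3 : ¬ Disjoint g.1 e3.1 := hUp hgU (hTU (by simp)) hge3
        rw [Finset.not_disjoint_iff] at hnd1 hnd2 hnd3
        obtain ⟨a1, ha1g, ha1x⟩ := hnd1
        obtain ⟨a2, ha2g, ha2z⟩ := hnd2
        obtain ⟨a3, ha3g, ha3e⟩ := hnd3
        by_cases hgA : g.1 ⊆ A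
        · rcases hginA g hgA with rfl | rfl | rfl
          · exact hgT (by simp)
          · exact hgT (by simp)
          · exact hgT (by simp)
        · have hle : (g.1 ∩ A).card ≤ 1 := by
            by_contra hle'
            have h2 : 2 ≤ (g.1 ∩ A).card := by omega
            have heq : g.1 ∩ A = g.1 := Finset.eq_of_subset_of_card_le
              Finset.inter_subset_left (by rw [g.2]; exact h2)
            exact hgA (Finset.inter_eq_left.1 heq)
          have hm1 : a1 ∈ g.1 ∩ A := Finset.mem_inter.2 ⟨ha1g, hxA ha1x⟩
          have hm2 : a2 ∈ g.1 ∩ A := Finset.mem_inter.2 ⟨ha2g, hzA ha2z⟩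
          have hm3 : a3 ∈ g.1 ∩ A := Finset.mem_inter.2 ⟨ha3g, he3A ha3e⟩
          have h12 : a1 = a2 := Finset.card_le_one.1 hle _ hm1 _ hm2
          have h13 : a1 = a3 := Finset.card_le_one.1 hle _ hm1 _ hm3
          subst h12 h13
          exact (Finset.mem_sdiff.1 ha3e).2 (Finset.mem_inter.2 ⟨ha1x, ha2z⟩)
    -- perp of the triad
    have hrD : r.1 ⊆ D := Finset.sdiff_subset
    have hdisAD : ∀ {s t : Finset (Fin 6)}, s ⊆ A → t ⊆ D → Disjoint s t := by
      intro s t hs htd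
      exact Finset.disjoint_left.2 fun a ha hb => (Finset.mem_sdiff.1 (htd hb)).2 (hs ha)
    have hperp : perp {x, z, e3} = ({u, w, r} : Set Edge) := by
      ext y
      rw [mem_perp_triple]
      constructor
      · rintro ⟨h1, h2, -⟩
        have hdxy : Disjoint x.1 y.1 := by
          rcases h1 with rfl | h
          · rcases h2 with h | h
            · first | exact absurd h.symm hxz | exact absurd h hxz
            · first | exact absurd h hd | exact absurd h.symm hd
          · exact h
        have hdzy : Disjoint z.1 y.1 := by
          rcases h2 with rfl | h
          · rcases h1 with h | h
            · first | exact absurd h hxz | exact absurd h.symm hxz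
            · first | exact absurd h hd | exact absurd h.symm hd
          · exact h
        rcases hthirdD y (hsubD hdxy hdzy) with h | h | h
        · exact Or.inl (Subtype.ext h)
        · exact Or.inr (Or.inl (Subtype.ext h))
        · exact Or.inr (Or.inr (Subtype.ext h))
      · rintro (rfl | rfl | rfl)
        · exact ⟨Or.inr hudx, Or.inr hudz, Or.inr (hdisAD he3A huD)⟩
        · exact ⟨Or.inr hwdx, Or.inr hwdz, Or.inr (hdisAD he3A hwD)⟩
        · exact ⟨Or.inr (hdisAD hxA hrD), Or.inr (hdisAD hzA hrD),
            Or.inr (hdisAD he3A hrD)⟩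
    set σ : Edge → Edge := fun e => if e = x then u else if e = z then w else r with hσ
    have hbij : Set.BijOn σ ({x, z, e3} : Set Edge) (perp {x, z, e3}) := by
      rw [hperp]
      exact bijOn_ite hxz hxe3 hze3 huw hur hwr
    refine ⟨hne, inS '' {p : NPoint | p.1.1 ∈ ({x, z, e3} : Set Edge) ∧ p.1.2 = σ p.1.1},
      Or.inl ⟨_, ⟨{x, z, e3}, σ, Or.inr htriad, hbij, rfl⟩, rfl⟩, ?_, ?_⟩
    · exact Set.mem_image_of_mem _ ⟨by simp, by simp [hσ]⟩
    · exact Set.mem_image_of_mem _ ⟨by simp, by simp [hσ, Ne.symm hxz]⟩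
/-! ### The pairing lemma -/

lemma disjoint_of_compl {sA s t : Finset (Fin 6)} (hs : s ⊆ sA)
    (ht : t ⊆ Finset.univ \ sA) : Disjoint s t :=
  Finset.disjoint_left.2 fun a ha hb => (Finset.mem_sdiff.1 (ht hb)).2 (hs ha)

/-- For any `x ≠ y` and `u ≠ v` there are `z, w` with `z` compatible with `u, v`,
`w` compatible with `x, y`, and `z` compatible with `w`. -/
lemma pair_lemma (x y u v : Edge) (hxy : x ≠ y) (huv : u ≠ v) :
    ∃ z w : Edge, Compat u z ∧ Compat v z ∧ Compat x w ∧ Compat y w ∧ Compat z w := by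
  by_cases hd : Disjoint x.1 y.1
  · -- x, y disjoint: extend to a matching and pick the part avoiding z
    obtain ⟨t, ht⟩ := comp_edge hd
    have huniv : x.1 ∪ y.1 ∪ t.1 = Finset.univ := by
      rw [ht]; exact Finset.union_sdiff_of_subset (Finset.subset_univ _)
    have hxt : Disjoint x.1 t.1 := by
      rw [ht]
      exact Finset.disjoint_left.2 fun a ha h2 =>
        (Finset.mem_sdiff.1 h2).2 (Finset.mem_union_left _ ha)
    have hyt : Disjoint y.1 t.1 := by
      rw [ht]
      exact Finset.disjoint_left.2 fun a ha h2 =>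
        (Finset.mem_sdiff.1 h2).2 (Finset.mem_union_right _ ha)
    obtain ⟨z, hzu, hzv⟩ := exists_compat_pair u v
    rcases avoid_matching hd hxt hyt huniv (z := z) with h | h | h
    · exact ⟨z, x, Or.inr hzu, Or.inr hzv, Compat.refl x, Or.inr hd.symm, Or.inr h.symm⟩
    · exact ⟨z, y, Or.inr hzu, Or.inr hzv, Or.inr hd, Compat.refl y, Or.inr h.symm⟩
    · exact ⟨z, t, Or.inr hzu, Or.inr hzv, Or.inr hxt, Or.inr hyt, Or.inr h.symm⟩
  · by_cases hd2 : Disjoint u.1 v.1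
    · -- u, v disjoint: symmetric
      obtain ⟨s, hs⟩ := comp_edge hd2
      have huniv : u.1 ∪ v.1 ∪ s.1 = Finset.univ := by
        rw [hs]; exact Finset.union_sdiff_of_subset (Finset.subset_univ _)
      have hus : Disjoint u.1 s.1 := by
        rw [hs]
        exact Finset.disjoint_left.2 fun a ha h2 =>
          (Finset.mem_sdiff.1 h2).2 (Finset.mem_union_left _ ha)
      have hvs : Disjoint v.1 s.1 := by
        rw [hs]
        exact Finset.disjoint_left.2 fun a ha h2 =>
          (Finset.mem_sdiff.1 h2).2 (Finset.mem_union_right _ ha)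
      obtain ⟨w, hwx, hwy⟩ := exists_compat_pair x y
      rcases avoid_matching hd2 hus hvs huniv (z := w) with h | h | h
      · exact ⟨u, w, Compat.refl u, Or.inr hd2.symm, Or.inr hwx, Or.inr hwy, Or.inr h⟩
      · exact ⟨v, w, Or.inr hd2, Compat.refl v, Or.inr hwx, Or.inr hwy, Or.inr h⟩
      · exact ⟨s, w, Or.inr hus, Or.inr hvs, Or.inr hwx, Or.inr hwy, Or.inr h⟩
    · -- both pairs intersect: triangles
      have hA : (x.1 ∪ y.1).card = 3 := union_card_three hxy hd
      have hB : (u.1 ∪ v.1).card = 3 := union_card_three huv hd2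
      set D := (Finset.univ : Finset (Fin 6)) \ (x.1 ∪ y.1) with hDdef
      set E := (Finset.univ : Finset (Fin 6)) \ (u.1 ∪ v.1) with hEdef
      have hDc : D.card = 3 := by
        rw [hDdef, Finset.card_sdiff_of_subset (Finset.subset_univ _), hA]; simp
      have hEc : E.card = 3 := by
        rw [hEdef, Finset.card_sdiff_of_subset (Finset.subset_univ _), hB]; simp
      have hcompatE : ∀ {z : Edge}, z.1 ⊆ E → Compat u z ∧ Compat v z := by
        intro z hz
        constructor
        · exact Or.inr (disjoint_of_compl Finset.subset_union_left (hEdef ▸ hz))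
        · exact Or.inr (disjoint_of_compl Finset.subset_union_right (hEdef ▸ hz))
      have hcompatD : ∀ {w : Edge}, w.1 ⊆ D → Compat x w ∧ Compat y w := by
        intro w hw
        constructor
        · exact Or.inr (disjoint_of_compl Finset.subset_union_left (hDdef ▸ hw))
        · exact Or.inr (disjoint_of_compl Finset.subset_union_right (hDdef ▸ hw))
      by_cases hDE : 2 ≤ (D ∩ E).card
      · obtain ⟨z, hz⟩ := exists_edge_subset hDE
        have hzD : z.1 ⊆ D := hz.trans Finset.inter_subset_left
        have hzE : z.1 ⊆ E := hz.trans Finset.inter_subset_right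
        obtain ⟨c1, c2⟩ := hcompatE hzE
        obtain ⟨c3, c4⟩ := hcompatD hzD
        exact ⟨z, z, c1, c2, c3, c4, Compat.refl z⟩
      · have hcard : 2 ≤ (E \ D).card := by
          have := Finset.card_sdiff_add_card_inter E D
          have h1 : (E ∩ D).card ≤ 1 := by
            rw [Finset.inter_comm] at hDE; omega
          omega
        obtain ⟨z, hz⟩ := exists_edge_subset hcard
        have hzE : z.1 ⊆ E := hz.trans Finset.sdiff_subset
        obtain ⟨w, hw⟩ := exists_edge_subset (show 2 ≤ D.card by omega)
        obtain ⟨c1, c2⟩ := hcompatE hzE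
        obtain ⟨c3, c4⟩ := hcompatD hw
        have hzw : Disjoint z.1 w.1 := Finset.disjoint_left.2 fun a ha hb =>
          (Finset.mem_sdiff.1 (hz ha)).2 (hw hb)
        exact ⟨z, w, c1, c2, c3, c4, Or.inr hzw⟩
/-! ### Distance upper bounds -/

lemma edist_SS (p q : NPoint) : BG.edist (inS p) (inS q) ≤ 3 := by
  obtain ⟨⟨x, u⟩, hxu⟩ := p
  obtain ⟨⟨y, v⟩, hyv⟩ := q
  by_cases hxy : x = y
  · subst hxy
    have e1 : BG.Adj (inS ⟨(x, u), hxu⟩) (inP x) := (adj_inP_inS ⟨(x, u), hxu⟩).symm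
    have e2 : BG.Adj (inP x) (inS ⟨(x, v), hyv⟩) := adj_inP_inS ⟨(x, v), hyv⟩
    have hw := SimpleGraph.edist_le (SimpleGraph.Walk.cons e1 (SimpleGraph.Walk.cons e2 SimpleGraph.Walk.nil))
    simp only [SimpleGraph.Walk.length_cons, SimpleGraph.Walk.length_nil] at hw
    exact le_trans hw (by norm_num)
  · by_cases hxv : Compat x v
    · have e1 : BG.Adj (inS ⟨(x, u), hxu⟩) (inP x) := (adj_inP_inS ⟨(x, u), hxu⟩).symm
      have e2 : BG.Adj (inP x) (inP' v) := adj_inP_inP' ⟨(x, v), hxv⟩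
      have e3 : BG.Adj (inP' v) (inS ⟨(y, v), hyv⟩) := (adj_inS_inP' ⟨(y, v), hyv⟩).symm
      have hw := SimpleGraph.edist_le (SimpleGraph.Walk.cons e1 (SimpleGraph.Walk.cons e2
        (SimpleGraph.Walk.cons e3 SimpleGraph.Walk.nil)))
      simpa using hw
    by_cases hyu : Compat y u
    · have e1 : BG.Adj (inS ⟨(x, u), hxu⟩) (inP' u) := adj_inS_inP' ⟨(x, u), hxu⟩
      have e2 : BG.Adj (inP' u) (inP y) := (adj_inP_inP' ⟨(y, u), hyu⟩).symm
      have e3 : BG.Adj (inP y) (inS ⟨(y, v), hyv⟩) := adj_inP_inS ⟨(y, v), hyv⟩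
      have hw := SimpleGraph.edist_le (SimpleGraph.Walk.cons e1 (SimpleGraph.Walk.cons e2
        (SimpleGraph.Walk.cons e3 SimpleGraph.Walk.nil)))
      simpa using hw
    · -- hard case
      have huv : u ≠ v := fun h => hxv (h ▸ hxu)
      obtain ⟨z, w, c1, c2, c3, c4, c5⟩ := pair_lemma x y u v hxy huv
      have hxz : x ≠ z := fun h => hxv (Compat.symm (by rw [h]; exact c2))
      have huw : u ≠ w := fun h => hyu (by rw [h]; exact c4)
      have hzy : z ≠ y := fun h => hyu (by rw [← h]; exact c1.symm)
      have hwv : w ≠ v := fun h => hxv (by rw [← h]; exact c3)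
      have e1 : BG.Adj (inS ⟨(x, u), hxu⟩) (inS ⟨(z, w), c5⟩) :=
        adjNG hxz huw hxu c1.symm c3 c5
      have e2 : BG.Adj (inS ⟨(z, w), c5⟩) (inS ⟨(y, v), hyv⟩) :=
        adjNG hzy hwv c5 c4 c2.symm hyv
      have hw := SimpleGraph.edist_le (SimpleGraph.Walk.cons e1
        (SimpleGraph.Walk.cons e2 SimpleGraph.Walk.nil))
      simp only [SimpleGraph.Walk.length_cons, SimpleGraph.Walk.length_nil] at hw
      exact le_trans hw (by norm_num)

lemma edist_SP (p : NPoint) (x : Edge) : BG.edist (inS p) (inP x) ≤ 3 := by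
  obtain ⟨s, h1, h2⟩ := exists_compat_pair p.1.1 x
  have e1 : BG.Adj (inS p) (inP p.1.1) := (adj_inP_inS p).symm
  have e2 : BG.Adj (inP p.1.1) (inP' s) := adj_inP_inP' ⟨(p.1.1, s), Or.inr h1⟩
  have e3 : BG.Adj (inP' s) (inP x) := (adj_inP_inP' ⟨(x, s), Or.inr h2⟩).symm
  have hw := SimpleGraph.edist_le (SimpleGraph.Walk.cons e1 (SimpleGraph.Walk.cons e2
    (SimpleGraph.Walk.cons e3 SimpleGraph.Walk.nil)))
  simpa using hw

lemma edist_SP' (p : NPoint) (u : Edge) : BG.edist (inS p) (inP' u) ≤ 3 := by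
  obtain ⟨s, h1, h2⟩ := exists_compat_pair p.1.2 u
  have e1 : BG.Adj (inS p) (inP' p.1.2) := adj_inS_inP' p
  have e2 : BG.Adj (inP' p.1.2) (inP s) := (adj_inP_inP' ⟨(s, p.1.2), Or.inr h1.symm⟩).symm
  have e3 : BG.Adj (inP s) (inP' u) := adj_inP_inP' ⟨(s, u), Or.inr h2.symm⟩
  have hw := SimpleGraph.edist_le (SimpleGraph.Walk.cons e1 (SimpleGraph.Walk.cons e2
    (SimpleGraph.Walk.cons e3 SimpleGraph.Walk.nil)))
  simpa using hw

lemma edist_PP (x y : Edge) : BG.edist (inP x) (inP y) ≤ 3 := by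
  obtain ⟨s, h1, h2⟩ := exists_compat_pair x y
  have e1 : BG.Adj (inP x) (inP' s) := adj_inP_inP' ⟨(x, s), Or.inr h1⟩
  have e2 : BG.Adj (inP' s) (inP y) := (adj_inP_inP' ⟨(y, s), Or.inr h2⟩).symm
  have hw := SimpleGraph.edist_le (SimpleGraph.Walk.cons e1
    (SimpleGraph.Walk.cons e2 SimpleGraph.Walk.nil))
  simp only [SimpleGraph.Walk.length_cons, SimpleGraph.Walk.length_nil] at hw
  exact le_trans hw (by norm_num)

lemma edist_P'P' (x y : Edge) : BG.edist (inP' x) (inP' y) ≤ 3 := by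
  obtain ⟨s, h1, h2⟩ := exists_compat_pair x y
  have e1 : BG.Adj (inP' x) (inP s) := (adj_inP_inP' ⟨(s, x), Or.inr h1.symm⟩).symm
  have e2 : BG.Adj (inP s) (inP' y) := adj_inP_inP' ⟨(s, y), Or.inr h2.symm⟩
  have hw := SimpleGraph.edist_le (SimpleGraph.Walk.cons e1
    (SimpleGraph.Walk.cons e2 SimpleGraph.Walk.nil))
  simp only [SimpleGraph.Walk.length_cons, SimpleGraph.Walk.length_nil] at hw
  exact le_trans hw (by norm_num)

lemma edist_PP' (x u : Edge) : BG.edist (inP x) (inP' u) ≤ 3 := by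
  obtain ⟨s, h1, h2⟩ := exists_compat_pair x u
  have e1 : BG.Adj (inP x) (inP' s) := adj_inP_inP' ⟨(x, s), Or.inr h1⟩
  have e2 : BG.Adj (inP' s) (inP u) := (adj_inP_inP' ⟨(u, s), Or.inr h2⟩).symm
  have e3 : BG.Adj (inP u) (inP' u) := adj_inP_inP' ⟨(u, u), Or.inl rfl⟩
  have hw := SimpleGraph.edist_le (SimpleGraph.Walk.cons e1 (SimpleGraph.Walk.cons e2
    (SimpleGraph.Walk.cons e3 SimpleGraph.Walk.nil)))
  simpa using hw

lemma edist_le_three (α β : BPoint) : BG.edist α β ≤ 3 := by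
  rcases α with p | x | x <;> rcases β with q | y | y
  · exact edist_SS p q
  · exact edist_SP p y
  · exact edist_SP' p y
  · refine (SimpleGraph.edist_comm (G := BG)).le.trans ?_; exact edist_SP q x
  · exact edist_PP x y
  · exact edist_PP' x y
  · refine (SimpleGraph.edist_comm (G := BG)).le.trans ?_; exact edist_SP' q x
  · refine (SimpleGraph.edist_comm (G := BG)).le.trans ?_; exact edist_PP' y x
  · exact edist_P'P' x y
/-! ### The lower bound and the main theorem -/

def x0 : Edge := ⟨{0, 1}, by decide⟩
def u0 : Edge := ⟨{1, 2}, by decide⟩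

lemma not_compat_x0u0 : ¬ Compat x0 u0 := by
  rintro (h | h)
  · exact absurd (congrArg Subtype.val h) (by decide)
  · exact absurd h (Finset.not_disjoint_iff.2 ⟨1, by decide, by decide⟩)

lemma no_adj_x0u0 : ¬ BG.Adj (inP x0) (inP' u0) := by
  rintro ⟨hne, L, hL, hx, hu⟩
  rcases hL with ⟨L₀, -, rfl⟩ | ⟨q, rfl⟩
  · obtain ⟨p, -, hp⟩ := hx
    exact inS_ne_inP p x0 hp
  · simp only [Set.mem_insert_iff, Set.mem_singleton_iff] at hx hu
    have h1 : q.1.1 = x0 := by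
      rcases hx with h | h | h
      · exact (inP_inj h.symm)
      · exact absurd h (inS_ne_inP q x0).symm
      · exact absurd h (inP_ne_inP' _ _)
    have h2 : q.1.2 = u0 := by
      rcases hu with h | h | h
      · exact absurd h (inP_ne_inP' _ _).symm
      · exact absurd h (inS_ne_inP' q u0).symm
      · exact inP'_inj h.symm
    exact not_compat_x0u0 (h1 ▸ h2 ▸ q.2)

lemma no_common_x0u0 (γ : BPoint) :
    ¬ (BG.Adj (inP x0) γ ∧ BG.Adj (inP' u0) γ) := by
  rintro ⟨h1, h2⟩
  obtain ⟨q, hq1, hq⟩ := adj_inP_char h1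
  obtain ⟨q', hq'1, hq'⟩ := adj_inP'_char h2
  rcases hq with rfl | rfl <;> rcases hq' with h | h
  · have : q = q' := inS_inj h
    subst this
    exact not_compat_x0u0 (hq1 ▸ hq'1 ▸ q.2)
  · exact inS_ne_inP q q'.1.1 h
  · exact (inS_ne_inP' q' q.1.2 h.symm)
  · exact inP_ne_inP' q'.1.1 q.1.2 h.symm
lemma three_le_walk (w : BG.Walk (inP x0) (inP' u0)) : 3 ≤ w.length := by
  cases w with
  | cons h1 w1 =>
    cases w1 with
    | nil => exact absurd h1 no_adj_x0u0
    | cons h2 w2 =>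
      cases w2 with
      | nil => exact absurd ⟨h1, h2.symm⟩ (no_common_x0u0 _)
      | cons h3 w3 => simp [SimpleGraph.Walk.length_cons]
/-- The collinearity graph of 𝕊 is connected and has diameter 3. -/
theorem statement14 : BG.Connected ∧ BG.diam = 3 := by
  have hle : ∀ a b : BPoint, BG.edist a b ≤ 3 := edist_le_three
  have hnt : ∀ a b : BPoint, BG.edist a b ≠ ⊤ := by
    intro a b h
    have := hle a b
    rw [h] at this
    exact absurd this (by simp)
  have hconn : BG.Connected := by
    haveI : Nonempty BPoint := ⟨inP x0⟩
    exact ⟨fun a b => SimpleGraph.reachable_of_edist_ne_top (hnt a b)⟩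
  refine ⟨hconn, ?_⟩
  obtain ⟨w, hw⟩ := (hconn.preconnected (inP x0) (inP' u0)).exists_walk_length_eq_edist
  have h3 : (3 : ℕ∞) ≤ BG.edist (inP x0) (inP' u0) := by
    rw [← hw]
    exact_mod_cast three_le_walk w
  have hedist : BG.edist (inP x0) (inP' u0) = 3 := le_antisymm (hle _ _) h3
  have hediam : BG.ediam = 3 := le_antisymm
    (SimpleGraph.ediam_le_of_edist_le fun u v => hle u v)
    (hedist ▸ SimpleGraph.edist_le_ediam)
  rw [SimpleGraph.diam, hediam]
  rfl
end

section
/- Let L = {β, θ, γ} ∈ 𝓛 be a line of 𝕊 contained in 𝓟, and let α ∈ P ∪ P' with d(α,β) = d(α,θ) = 2 in 𝕊. Then α is collinear with γ in 𝕊. -/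
namespace St16

abbrev F6 := Finset (Fin 6)

lemma union3_eq_univ {b t g : F6} (hb : b.card = 2) (ht : t.card = 2) (hg : g.card = 2)
    (hbt : Disjoint b t) (hbg : Disjoint b g) (htg : Disjoint t g) :
    b ∪ t ∪ g = Finset.univ := by
  apply Finset.eq_univ_of_card
  rw [Finset.card_union_of_disjoint (by rw [Finset.disjoint_union_left]; exact ⟨hbg, htg⟩),
      Finset.card_union_of_disjoint hbt, hb, ht, hg]
  simp

lemma factor_third {b t g x : F6} (hb : b.card = 2) (ht : t.card = 2) (hg : g.card = 2)
    (hx : x.card = 2) (hbt : Disjoint b t) (hbg : Disjoint b g) (htg : Disjoint t g)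
    (hxb : Disjoint x b) (hxt : Disjoint x t) : x = g := by
  have huniv := union3_eq_univ hb ht hg hbt hbg htg
  have hsub : x ⊆ g := by
    intro a ha
    have hau : a ∈ b ∪ t ∪ g := huniv ▸ Finset.mem_univ a
    simp only [Finset.mem_union] at hau
    rcases hau with (h | h) | h
    · exact absurd h (Finset.disjoint_left.mp hxb ha)
    · exact absurd h (Finset.disjoint_left.mp hxt ha)
    · exact h
  exact Finset.eq_of_subset_of_card_le hsub (by rw [hg, hx])

lemma factor_none {b t g x : F6} (hb : b.card = 2) (ht : t.card = 2) (hg : g.card = 2)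
    (hx : x.card = 2) (hbt : Disjoint b t) (hbg : Disjoint b g) (htg : Disjoint t g)
    (hxb : Disjoint x b) (hxt : Disjoint x t) (hxg : Disjoint x g) : False := by
  have huniv := union3_eq_univ hb ht hg hbt hbg htg
  obtain ⟨a, ha⟩ := Finset.card_pos.mp (by rw [hx]; norm_num : 0 < x.card)
  have hau : a ∈ b ∪ t ∪ g := huniv ▸ Finset.mem_univ a
  simp only [Finset.mem_union] at hau
  rcases hau with (h | h) | h
  · exact Finset.disjoint_left.mp hxb ha h
  · exact Finset.disjoint_left.mp hxt ha h
  · exact Finset.disjoint_left.mp hxg ha h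

lemma union_card_three {b t : F6} (hb : b.card = 2) (ht : t.card = 2) (hne : b ≠ t)
    (hint : ¬ Disjoint b t) : (b ∪ t).card = 3 := by
  have h1 : 0 < (b ∩ t).card :=
    Finset.card_pos.mpr (Finset.not_disjoint_iff_nonempty_inter.mp hint)
  have h2 : (b ∩ t).card ≤ 2 := hb ▸ Finset.card_le_card Finset.inter_subset_left
  have h3 : (b ∩ t).card ≠ 2 := by
    intro h
    have hbt : b ∩ t = b :=
      Finset.eq_of_subset_of_card_le Finset.inter_subset_left (by omega)
    have hsub : b ⊆ t := by rw [← hbt]; exact Finset.inter_subset_right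
    exact hne (Finset.eq_of_subset_of_card_le hsub (by omega))
  have h4 := Finset.card_union_add_card_inter b t
  omega

lemma two_subsets {A : F6} (hA : A.card = 3) {e1 e2 e3 u : F6}
    (h1 : e1.card = 2) (h2 : e2.card = 2) (h3 : e3.card = 2) (hu : u.card = 2)
    (d12 : e1 ≠ e2) (d13 : e1 ≠ e3) (d23 : e2 ≠ e3)
    (s1 : e1 ⊆ A) (s2 : e2 ⊆ A) (s3 : e3 ⊆ A) (su : u ⊆ A) :
    u = e1 ∨ u = e2 ∨ u = e3 := by
  have hS : ({e1, e2, e3} : Finset F6) ⊆ A.powersetCard 2 := by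
    intro s hs
    simp only [Finset.mem_insert, Finset.mem_singleton] at hs
    rcases hs with rfl | rfl | rfl
    · exact Finset.mem_powersetCard.mpr ⟨s1, h1⟩
    · exact Finset.mem_powersetCard.mpr ⟨s2, h2⟩
    · exact Finset.mem_powersetCard.mpr ⟨s3, h3⟩
  have hcard : ({e1, e2, e3} : Finset F6).card = 3 := by
    rw [Finset.card_insert_of_notMem (by simp [d12, d13]),
        Finset.card_insert_of_notMem (by simp [d23]), Finset.card_singleton]
  have heq : ({e1, e2, e3} : Finset F6) = A.powersetCard 2 :=
    Finset.eq_of_subset_of_card_le hS (by rw [Finset.card_powersetCard, hA, hcard]; decide)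
  have hmem : u ∈ ({e1, e2, e3} : Finset F6) := by
    rw [heq]; exact Finset.mem_powersetCard.mpr ⟨su, hu⟩
  simpa using hmem

lemma pigeon3 {α : Type*} [DecidableEq α] {a b c s1 s2 s3 u : α}
    (h1 : s1 = a ∨ s1 = b ∨ s1 = c) (h2 : s2 = a ∨ s2 = b ∨ s2 = c)
    (h3 : s3 = a ∨ s3 = b ∨ s3 = c)
    (d12 : s1 ≠ s2) (d13 : s1 ≠ s3) (d23 : s2 ≠ s3)
    (hu : u = a ∨ u = b ∨ u = c) (ne1 : u ≠ s1) (ne2 : u ≠ s2) : u = s3 := by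
  have hsub : ({s1, s2, s3} : Finset α) ⊆ {a, b, c} := by
    intro z hz
    simp only [Finset.mem_insert, Finset.mem_singleton] at hz ⊢
    rcases hz with rfl | rfl | rfl <;> assumption
  have hc : ({s1, s2, s3} : Finset α).card = 3 := by
    rw [Finset.card_insert_of_notMem (by simp [d12, d13]),
        Finset.card_insert_of_notMem (by simp [d23]), Finset.card_singleton]
  have heq : ({s1, s2, s3} : Finset α) = {a, b, c} := by
    apply Finset.eq_of_subset_of_card_le hsub
    calc ({a, b, c} : Finset α).card ≤ 2 + ({c} : Finset α).card := by
          refine le_trans (Finset.card_insert_le _ _) ?_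
          exact Nat.add_le_add_right (le_trans (Finset.card_insert_le _ _) (by simp)) 1
      _ ≤ 3 := by simp
      _ = ({s1, s2, s3} : Finset α).card := hc.symm
  have : u ∈ ({s1, s2, s3} : Finset α) := by
    rw [heq]; simp only [Finset.mem_insert, Finset.mem_singleton]; exact hu
  simp only [Finset.mem_insert, Finset.mem_singleton] at this
  rcases this with rfl | rfl | rfl
  · exact absurd rfl ne1
  · exact absurd rfl ne2
  · rfl


lemma triad_struct {b t g : Edge} (hbt : b ≠ t) (hbg : b ≠ g) (htg : t ≠ g)
    (hct : IsCompleteTriad {b, t, g}) :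
    ¬Disjoint b.1 t.1 ∧ ¬Disjoint b.1 g.1 ∧ ¬Disjoint t.1 g.1 ∧
      (b.1 ∪ t.1 ∪ g.1).card = 3 := by
  have hp := hct.1.2
  have hmb : b ∈ ({b, t, g} : Set Edge) := by simp
  have hmt : t ∈ ({b, t, g} : Set Edge) := by simp
  have hmg : g ∈ ({b, t, g} : Set Edge) := by simp
  have ibt : ¬Disjoint b.1 t.1 := hp hmb hmt hbt
  have ibg : ¬Disjoint b.1 g.1 := hp hmb hmg hbg
  have itg : ¬Disjoint t.1 g.1 := hp hmt hmg htg
  refine ⟨ibt, ibg, itg, ?_⟩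
  have hbt1 : b.1 ≠ t.1 := fun h => hbt (Subtype.ext h)
  have hbtu : (b.1 ∪ t.1).card = 3 := union_card_three b.2 t.2 hbt1 ibt
  suffices hgs : g.1 ⊆ b.1 ∪ t.1 by
    rw [Finset.union_eq_left.mpr hgs, hbtu]
  by_contra hgs
  obtain ⟨q, hqg, hqbt⟩ := Finset.not_subset.mp hgs
  obtain ⟨p, hpg, hpb⟩ := Finset.not_disjoint_iff.mp (fun h => ibg h.symm)
  have hpq : p ≠ q := fun h => hqbt (by rw [← h]; exact Finset.mem_union_left _ hpb)
  have hgpq : g.1 = {p, q} := by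
    refine (Finset.eq_of_subset_of_card_le ?_ ?_).symm
    · intro z hz
      simp only [Finset.mem_insert, Finset.mem_singleton] at hz
      rcases hz with rfl | rfl <;> assumption
    · rw [g.2, Finset.card_pair hpq]
  have hpt : p ∈ t.1 := by
    obtain ⟨r, hrt, hrg⟩ := Finset.not_disjoint_iff.mp itg
    have hr : r ∈ ({p, q} : F6) := hgpq ▸ hrg
    simp only [Finset.mem_insert, Finset.mem_singleton] at hr
    rcases hr with rfl | rfl
    · exact hrt
    · exact absurd (Finset.mem_union_right _ hrt) hqbt
  have hAcard : (b.1 ∪ t.1 ∪ g.1).card ≤ 5 := by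
    calc (b.1 ∪ t.1 ∪ g.1).card ≤ (b.1 ∪ t.1).card + g.1.card := Finset.card_union_le _ _
      _ ≤ 5 := by rw [hbtu, g.2]
  obtain ⟨rr, hrr⟩ : ((b.1 ∪ t.1 ∪ g.1)ᶜ).Nonempty := by
    apply Finset.card_pos.mp
    rw [Finset.card_compl]
    simp only [Fintype.card_fin]
    omega
  rw [Finset.mem_compl] at hrr
  have hprr : p ≠ rr := by
    intro h
    exact hrr (by rw [← h]
                  exact Finset.mem_union_left _ (Finset.mem_union_left _ hpb))
  obtain ⟨e, he⟩ : ∃ e : Edge, e.1 = {p, rr} := ⟨⟨_, Finset.card_pair hprr⟩, rfl⟩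
  have hpe : p ∈ e.1 := by rw [he]; simp
  have hrre : rr ∈ e.1 := by rw [he]; simp
  have hen : e ∉ ({b, t, g} : Set Edge) := by
    intro hmem
    have : rr ∈ b.1 ∪ t.1 ∪ g.1 := by
      rcases hmem with rfl | rfl | rfl
      · exact Finset.mem_union_left _ (Finset.mem_union_left _ hrre)
      · exact Finset.mem_union_left _ (Finset.mem_union_right _ hrre)
      · exact Finset.mem_union_right _ hrre
    exact hrr this
  apply hct.2
  refine ⟨insert e {b, t, g}, Set.subset_insert _ _, ?_, ?_⟩
  · rw [Set.ncard_insert_of_notMem hen (Set.toFinite _),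
        Set.ncard_eq_three.mpr ⟨b, t, g, hbt, hbg, htg, rfl⟩]
  · have hsymm : Symmetric (fun x y : Edge => ¬Disjoint x.1 y.1) :=
      fun x y h hd => h hd.symm
    haveI : Std.Symm (fun x y : Edge => ¬Disjoint x.1 y.1) := ⟨fun a b h => hsymm h⟩
    rw [Set.pairwise_insert_of_symm]
    refine ⟨hp, ?_⟩
    intro z hz _
    apply Finset.not_disjoint_iff.mpr
    rcases hz with rfl | rfl | rfl
    · exact ⟨p, hpe, hpb⟩
    · exact ⟨p, hpe, hpt⟩
    · exact ⟨p, hpe, hpg⟩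

lemma factor_struct {b t g : Edge} (hbt : b ≠ t) (hbg : b ≠ g) (htg : t ≠ g)
    (hf : IsFactor {b, t, g}) :
    Disjoint b.1 t.1 ∧ Disjoint b.1 g.1 ∧ Disjoint t.1 g.1 := by
  have hp := hf.2
  have hmb : b ∈ ({b, t, g} : Set Edge) := by simp
  have hmt : t ∈ ({b, t, g} : Set Edge) := by simp
  have hmg : g ∈ ({b, t, g} : Set Edge) := by simp
  exact ⟨hp hmb hmt hbt, hp hmb hmg hbg, hp hmt hmg htg⟩

lemma perp_mem {b t g s : Edge} (hs : s ∈ perp {b, t, g}) :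
    (b = s ∨ Disjoint b.1 s.1) ∧ (t = s ∨ Disjoint t.1 s.1) ∧ (g = s ∨ Disjoint g.1 s.1) :=
  ⟨hs b (by simp), hs t (by simp), hs g (by simp)⟩

lemma perp_mem_factor {b t g s : Edge} (hbt : Disjoint b.1 t.1) (hbg : Disjoint b.1 g.1)
    (htg : Disjoint t.1 g.1) (hs : s ∈ perp {b, t, g}) : s = b ∨ s = t ∨ s = g := by
  obtain ⟨h1, h2, h3⟩ := perp_mem hs
  rcases h1 with rfl | h1
  · exact Or.inl rfl
  rcases h2 with rfl | h2
  · exact Or.inr (Or.inl rfl)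
  rcases h3 with rfl | h3
  · exact Or.inr (Or.inr rfl)
  exact absurd (factor_none b.2 t.2 g.2 s.2 hbt hbg htg h1.symm h2.symm h3.symm) id

lemma perp_mem_triad {b t g s : Edge} (hbt : b ≠ t) (hbg : b ≠ g)
    (ibt : ¬Disjoint b.1 t.1) (ibg : ¬Disjoint b.1 g.1)
    (hs : s ∈ perp {b, t, g}) :
    Disjoint s.1 b.1 ∧ Disjoint s.1 t.1 ∧ Disjoint s.1 g.1 := by
  obtain ⟨h1, h2, h3⟩ := perp_mem hs
  have h1' : Disjoint b.1 s.1 := by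
    rcases h1 with h1 | h1
    · exfalso
      rw [← h1] at h2
      rcases h2 with h2 | h2
      · exact hbt h2.symm
      · exact ibt h2.symm
    · exact h1
  have h2' : Disjoint t.1 s.1 := by
    rcases h2 with h2 | h2
    · exfalso
      rw [← h2] at h1
      rcases h1 with h1 | h1
      · exact hbt h1
      · exact ibt h1
    · exact h2
  have h3' : Disjoint g.1 s.1 := by
    rcases h3 with h3 | h3
    · exfalso
      rw [← h3] at h1
      rcases h1 with h1 | h1
      · exact hbg h1
      · exact ibg h1
    · exact h3
  exact ⟨h1'.symm, h2'.symm, h3'.symm⟩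


lemma disj3_subset_compl {b t g s : Edge} (d1 : Disjoint s.1 b.1) (d2 : Disjoint s.1 t.1)
    (d3 : Disjoint s.1 g.1) : s.1 ⊆ (b.1 ∪ t.1 ∪ g.1)ᶜ := by
  intro a ha
  rw [Finset.mem_compl]
  intro hmem
  rcases Finset.mem_union.mp hmem with h | h
  · rcases Finset.mem_union.mp h with h' | h'
    · exact Finset.disjoint_left.mp d1 ha h'
    · exact Finset.disjoint_left.mp d2 ha h'
  · exact Finset.disjoint_left.mp d3 ha h

lemma compl_card3 {b t g : Edge} (hA : (b.1 ∪ t.1 ∪ g.1).card = 3) :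
    ((b.1 ∪ t.1 ∪ g.1)ᶜ).card = 3 := by
  rw [Finset.card_compl, hA]
  simp

lemma coreP {b t g sb st x : Edge}
    (hbt : b ≠ t) (hbg : b ≠ g) (htg : t ≠ g) (hs12 : sb ≠ st)
    (hT : IsFactor {b, t, g} ∨ IsCompleteTriad {b, t, g})
    (hsb : sb ∈ perp {b, t, g}) (hst : st ∈ perp {b, t, g})
    (hx1 : x = sb ∨ Disjoint x.1 sb.1) (hx2 : x = st ∨ Disjoint x.1 st.1)
    (hxb : x ≠ b) (hxt : x ≠ t) : x = g := by
  rcases hT with hf | hct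
  · obtain ⟨dbt, dbg, dtg⟩ := factor_struct hbt hbg htg hf
    have hsbm := perp_mem_factor dbt dbg dtg hsb
    have hstm := perp_mem_factor dbt dbg dtg hst
    have hmem : x = b ∨ x = t ∨ x = g := by
      rcases hx1 with h | hdx1
      · rw [h]; exact hsbm
      rcases hx2 with h | hdx2
      · rw [h]; exact hstm
      rcases hsbm with h1 | h1 | h1 <;> rw [h1] at hdx1 <;>
        rcases hstm with h2 | h2 | h2 <;> rw [h2] at hdx2
      · exact absurd (h1.trans h2.symm) hs12
      · exact Or.inr (Or.inr (Subtype.ext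
          (factor_third b.2 t.2 g.2 x.2 dbt dbg dtg hdx1 hdx2)))
      · exact Or.inr (Or.inl (Subtype.ext
          (factor_third b.2 g.2 t.2 x.2 dbg dbt dtg.symm hdx1 hdx2)))
      · exact Or.inr (Or.inr (Subtype.ext
          (factor_third t.2 b.2 g.2 x.2 dbt.symm dtg dbg hdx1 hdx2)))
      · exact absurd (h1.trans h2.symm) hs12
      · exact Or.inl (Subtype.ext
          (factor_third t.2 g.2 b.2 x.2 dtg dbt.symm dbg.symm hdx1 hdx2))
      · exact Or.inr (Or.inl (Subtype.ext
          (factor_third g.2 b.2 t.2 x.2 dbg.symm dtg.symm dbt hdx1 hdx2)))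
      · exact Or.inl (Subtype.ext
          (factor_third g.2 t.2 b.2 x.2 dtg.symm dbg.symm dbt.symm hdx1 hdx2))
      · exact absurd (h1.trans h2.symm) hs12
    rcases hmem with h | h | h
    · exact absurd h hxb
    · exact absurd h hxt
    · exact h
  · obtain ⟨ibt, ibg, itg, hA⟩ := triad_struct hbt hbg htg hct
    obtain ⟨d1b, d1t, d1g⟩ := perp_mem_triad hbt hbg ibt ibg hsb
    obtain ⟨d2b, d2t, d2g⟩ := perp_mem_triad hbt hbg ibt ibg hst
    have hsbA := disj3_subset_compl d1b d1t d1g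
    have hstA := disj3_subset_compl d2b d2t d2g
    have hAc := compl_card3 hA
    have hns : ¬Disjoint sb.1 st.1 := by
      intro hd
      have hle := Finset.card_le_card (Finset.union_subset hsbA hstA)
      rw [Finset.card_union_of_disjoint hd, sb.2, st.2, hAc] at hle
      omega
    have hdx1 : Disjoint x.1 sb.1 := by
      rcases hx1 with h | h
      · rw [h] at hx2
        rcases hx2 with h2 | h2
        · exact (hs12 h2).elim
        · exact (hns h2).elim
      · exact h
    have hdx2 : Disjoint x.1 st.1 := by
      rcases hx2 with h | h
      · rw [h] at hx1
        rcases hx1 with h1 | h1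
        · exact (hs12 h1.symm).elim
        · exact (hns h1.symm).elim
      · exact h
    have hsbst : sb.1 ∪ st.1 = (b.1 ∪ t.1 ∪ g.1)ᶜ := by
      apply Finset.eq_of_subset_of_card_le (Finset.union_subset hsbA hstA)
      rw [hAc, union_card_three sb.2 st.2 (fun h => hs12 (Subtype.ext h)) hns]
    have hxA : x.1 ⊆ b.1 ∪ t.1 ∪ g.1 := by
      intro a ha
      by_contra hmem
      have hc : a ∈ (b.1 ∪ t.1 ∪ g.1)ᶜ := Finset.mem_compl.mpr hmem
      rw [← hsbst] at hc
      rcases Finset.mem_union.mp hc with h | h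
      · exact Finset.disjoint_left.mp hdx1 ha h
      · exact Finset.disjoint_left.mp hdx2 ha h
    have hres := two_subsets hA b.2 t.2 g.2 x.2
      (fun h => hbt (Subtype.ext h)) (fun h => hbg (Subtype.ext h))
      (fun h => htg (Subtype.ext h))
      (fun a ha => Finset.mem_union_left _ (Finset.mem_union_left _ ha))
      (fun a ha => Finset.mem_union_left _ (Finset.mem_union_right _ ha))
      (fun a ha => Finset.mem_union_right _ ha) hxA
    rcases hres with h | h | h
    · exact absurd (Subtype.ext h) hxb
    · exact absurd (Subtype.ext h) hxt
    · exact Subtype.ext h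

lemma coreP' {b t g sb st sg u : Edge}
    (hbt : b ≠ t) (hbg : b ≠ g) (htg : t ≠ g)
    (hs12 : sb ≠ st) (hs13 : sb ≠ sg) (hs23 : st ≠ sg)
    (hT : IsFactor {b, t, g} ∨ IsCompleteTriad {b, t, g})
    (hsb : sb ∈ perp {b, t, g}) (hst : st ∈ perp {b, t, g}) (hsg : sg ∈ perp {b, t, g})
    (hu1 : b = u ∨ Disjoint b.1 u.1) (hu2 : t = u ∨ Disjoint t.1 u.1)
    (hub : u ≠ sb) (hut : u ≠ st) : u = sg := by
  rcases hT with hf | hct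
  · obtain ⟨dbt, dbg, dtg⟩ := factor_struct hbt hbg htg hf
    have hsbm := perp_mem_factor dbt dbg dtg hsb
    have hstm := perp_mem_factor dbt dbg dtg hst
    have hsgm := perp_mem_factor dbt dbg dtg hsg
    have hum : u = b ∨ u = t ∨ u = g := by
      rcases hu1 with h | h
      · exact Or.inl h.symm
      rcases hu2 with h2 | h2
      · exact Or.inr (Or.inl h2.symm)
      · exact Or.inr (Or.inr (Subtype.ext
          (factor_third b.2 t.2 g.2 u.2 dbt dbg dtg h.symm h2.symm)))
    exact pigeon3 hsbm hstm hsgm hs12 hs13 hs23 hum hub hut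
  · obtain ⟨ibt, ibg, itg, hA⟩ := triad_struct hbt hbg htg hct
    obtain ⟨d1b, d1t, d1g⟩ := perp_mem_triad hbt hbg ibt ibg hsb
    obtain ⟨d2b, d2t, d2g⟩ := perp_mem_triad hbt hbg ibt ibg hst
    obtain ⟨d3b, d3t, d3g⟩ := perp_mem_triad hbt hbg ibt ibg hsg
    have hAc := compl_card3 hA
    have hdub : Disjoint u.1 b.1 := by
      rcases hu1 with h | h
      · rcases hu2 with h2 | h2
        · exact (hbt (h.trans h2.symm)).elim
        · rw [← h] at h2
          exact (ibt h2.symm).elim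
      · exact h.symm
    have hdut : Disjoint u.1 t.1 := by
      rcases hu2 with h | h
      · rcases hu1 with h1 | h1
        · exact (hbt (h1.trans h.symm)).elim
        · rw [← h] at h1
          exact (ibt h1).elim
      · exact h.symm
    have hbtu3 : (b.1 ∪ t.1).card = 3 :=
      union_card_three b.2 t.2 (fun h => hbt (Subtype.ext h)) ibt
    have hbteq : b.1 ∪ t.1 = b.1 ∪ t.1 ∪ g.1 :=
      Finset.eq_of_subset_of_card_le Finset.subset_union_left (by rw [hbtu3, hA])
    have huA : u.1 ⊆ (b.1 ∪ t.1 ∪ g.1)ᶜ := by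
      intro a ha
      rw [Finset.mem_compl, ← hbteq]
      intro hmem
      rcases Finset.mem_union.mp hmem with h | h
      · exact Finset.disjoint_left.mp hdub ha h
      · exact Finset.disjoint_left.mp hdut ha h
    have hres := two_subsets hAc sb.2 st.2 sg.2 u.2
      (fun h => hs12 (Subtype.ext h)) (fun h => hs13 (Subtype.ext h))
      (fun h => hs23 (Subtype.ext h))
      (disj3_subset_compl d1b d1t d1g) (disj3_subset_compl d2b d2t d2g)
      (disj3_subset_compl d3b d3t d3g) huA
    rcases hres with h | h | h
    · exact absurd (Subtype.ext h) hub
    · exact absurd (Subtype.ext h) hut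
    · exact Subtype.ext h


lemma inP_ne_inS (x : Edge) (p : NPoint) : inP x ≠ inS p := by
  intro h; cases h

lemma inP'_ne_inS (u : Edge) (p : NPoint) : inP' u ≠ inS p := by
  intro h; cases h

lemma adj_inP_inS {x : Edge} {p : NPoint} (h : p.1.1 = x) : BG.Adj (inP x) (inS p) := by
  unfold BG
  refine ⟨inP_ne_inS x p, {inP p.1.1, inS p, inP' p.1.2}, Or.inr ⟨p, rfl⟩, ?_, ?_⟩
  · rw [h]; left; rfl
  · right; left; rfl

lemma adj_inP'_inS {u : Edge} {p : NPoint} (h : p.1.2 = u) : BG.Adj (inP' u) (inS p) := by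
  unfold BG
  refine ⟨inP'_ne_inS u p, {inP p.1.1, inS p, inP' p.1.2}, Or.inr ⟨p, rfl⟩, ?_, ?_⟩
  · rw [h]; right; right; rfl
  · right; left; rfl

lemma adj_inP_decode {x : Edge} {m : BPoint} (h : BG.Adj (inP x) m) :
    (∃ p : NPoint, m = inS p ∧ p.1.1 = x) ∨
    (∃ u : Edge, m = inP' u ∧ (x = u ∨ Disjoint x.1 u.1)) := by
  obtain ⟨hne, L, hBL, hxm, hmm⟩ : _ ∧ _ := h
  rcases hBL with ⟨L₀, _, rfl⟩ | ⟨q, rfl⟩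
  · obtain ⟨p, _, hp⟩ := hxm
    exact absurd hp.symm (inP_ne_inS x p)
  · have hx : x = q.1.1 := by
      rcases hxm with h | h | h
      · exact Sum.inl.inj (Sum.inr.inj h)
      · exact absurd h (by intro hh; cases hh)
      · exact absurd h (by intro hh; cases hh)
    rcases hmm with h | h | h
    · exact absurd (h.trans (by rw [hx])) hne.symm
    · exact Or.inl ⟨q, h, hx.symm⟩
    · refine Or.inr ⟨q.1.2, h, ?_⟩
      rw [hx]
      exact q.2

lemma adj_inP'_decode {u : Edge} {m : BPoint} (h : BG.Adj (inP' u) m) :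
    (∃ p : NPoint, m = inS p ∧ p.1.2 = u) ∨
    (∃ y : Edge, m = inP y ∧ (y = u ∨ Disjoint y.1 u.1)) := by
  obtain ⟨hne, L, hBL, hum, hmm⟩ : _ ∧ _ := h
  rcases hBL with ⟨L₀, _, rfl⟩ | ⟨q, rfl⟩
  · obtain ⟨p, _, hp⟩ := hum
    exact absurd hp.symm (inP'_ne_inS u p)
  · have hu : u = q.1.2 := by
      rcases hum with h | h | h
      · exact absurd h (by intro hh; cases hh)
      · exact absurd h (by intro hh; cases hh)
      · exact Sum.inr.inj (Sum.inr.inj h)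
    rcases hmm with h | h | h
    · refine Or.inr ⟨q.1.1, h, ?_⟩
      rw [hu]
      exact q.2
    · exact Or.inl ⟨q, h, hu.symm⟩
    · exact absurd (h.trans (by rw [hu])) hne.symm

lemma adj_inS_inS {p q : NPoint} (h : BG.Adj (inS p) (inS q)) : NG.Adj p q := by
  obtain ⟨hne, L, hBL, h1, h2⟩ : _ ∧ _ := h
  have hnepq : p ≠ q := fun hh => hne (congrArg inS hh)
  rcases hBL with ⟨L₀, hL₀, rfl⟩ | ⟨r, rfl⟩
  · obtain ⟨p', hp', hp⟩ := h1
    obtain ⟨q', hq', hq⟩ := h2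
    have hpp : p' = p := Sum.inl.inj hp
    have hqq : q' = q := Sum.inl.inj hq
    rw [hpp] at hp'
    rw [hqq] at hq'
    exact ⟨hnepq, L₀, hL₀, hp', hq'⟩
  · exfalso
    have hp : p = r := by
      rcases h1 with h | h | h
      · exact absurd h (by intro hh; cases hh)
      · exact Sum.inl.inj h
      · exact absurd h (by intro hh; cases hh)
    have hq : q = r := by
      rcases h2 with h | h | h
      · exact absurd h (by intro hh; cases hh)
      · exact Sum.inl.inj h
      · exact absurd h (by intro hh; cases hh)
    exact hnepq (hp.trans hq.symm)

lemma ngadj_perp {p q : NPoint} (h : NG.Adj p q) :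
    p.1.1 = q.1.2 ∨ Disjoint p.1.1.1 q.1.2.1 := by
  obtain ⟨hne, L, ⟨T, σ, hT, hbij, rfl⟩, hp, hq⟩ : _ ∧ _ := h
  have h1 : q.1.2 ∈ perp T := hq.2 ▸ hbij.mapsTo hq.1
  exact h1 p.1.1 hp.1

lemma exists_mid {a c : BPoint} (h : BG.dist a c = 2) :
    ¬ BG.Adj a c ∧ ∃ m, BG.Adj a m ∧ BG.Adj m c := by
  constructor
  · intro had
    rw [SimpleGraph.dist_eq_one_iff_adj.mpr had] at h
    exact absurd h (by norm_num)
  · have hr : BG.Reachable a c :=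
      SimpleGraph.Reachable.of_dist_ne_zero (by rw [h]; norm_num)
    obtain ⟨w, hw⟩ := hr.exists_walk_length_eq_dist
    rw [h] at hw
    cases w with
    | nil => simp at hw
    | cons h1 w' =>
      cases w' with
      | nil => simp at hw
      | cons h2 w'' =>
        simp only [SimpleGraph.Walk.length_cons] at hw
        have hw0 : w''.length = 0 := by omega
        have heq := SimpleGraph.Walk.eq_of_length_eq_zero hw0
        exact ⟨_, h1, heq ▸ h2⟩

lemma dist2_inP {x : Edge} {p : NPoint} (h : BG.dist (inP x) (inS p) = 2) :
    p.1.1 ≠ x ∧ (x = p.1.2 ∨ Disjoint x.1 p.1.2.1) := by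
  obtain ⟨hnadj, m, h1, h2⟩ := exists_mid h
  refine ⟨fun hx => hnadj (adj_inP_inS hx), ?_⟩
  rcases adj_inP_decode h1 with ⟨q, rfl, hq⟩ | ⟨u, rfl, hu⟩
  · have hng := adj_inS_inS h2
    have hperp := ngadj_perp hng
    rwa [hq] at hperp
  · rcases adj_inP'_decode h2 with ⟨p', hp', hval⟩ | ⟨y, hy, _⟩
    · have hpp : p' = p := Sum.inl.inj hp'.symm
      rw [hpp] at hval
      rw [hval]
      exact hu
    · exact absurd hy (by intro hh; cases hh)

lemma dist2_inP' {u : Edge} {p : NPoint} (h : BG.dist (inP' u) (inS p) = 2) :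
    p.1.2 ≠ u ∧ (p.1.1 = u ∨ Disjoint p.1.1.1 u.1) := by
  obtain ⟨hnadj, m, h1, h2⟩ := exists_mid h
  refine ⟨fun hx => hnadj (adj_inP'_inS hx), ?_⟩
  rcases adj_inP'_decode h1 with ⟨q, rfl, hq⟩ | ⟨y, rfl, hy⟩
  · have hng := (adj_inS_inS h2).symm
    have hperp := ngadj_perp hng
    rwa [hq] at hperp
  · rcases adj_inP_decode h2 with ⟨p', hp', hval⟩ | ⟨w, hw, _⟩
    · have hpp : p' = p := Sum.inl.inj hp'.symm
      rw [hpp] at hval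
      rw [← hval] at hy
      exact hy
    · exact absurd hw (by intro hh; cases hh)

end St16

open St16 in
/-- If `L = {β,θ,γ} ∈ 𝓛` is a line of 𝕊 contained in 𝓟 and `α ∈ P ∪ P'`
with `d(α,β) = d(α,θ) = 2` in 𝕊, then `α` is collinear with `γ` in 𝕊. -/
theorem statement16 (β θ γ : NPoint)
    (hβθ : β ≠ θ) (hβγ : β ≠ γ) (hθγ : θ ≠ γ)
    (hL : IsLine {β, θ, γ}) (α : BPoint)
    (hα : (∃ x : Edge, α = inP x) ∨ (∃ u : Edge, α = inP' u))
    (h1 : BG.dist α (inS β) = 2) (h2 : BG.dist α (inS θ) = 2) :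
    BG.Adj α (inS γ) := by
  obtain ⟨T, σ, hT, hbij, hLeq⟩ := hL
  have hβ : β.1.1 ∈ T ∧ β.1.2 = σ β.1.1 := by
    have hm : β ∈ ({β, θ, γ} : Set NPoint) := by simp
    rw [hLeq] at hm
    exact hm
  have hθ : θ.1.1 ∈ T ∧ θ.1.2 = σ θ.1.1 := by
    have hm : θ ∈ ({β, θ, γ} : Set NPoint) := by simp
    rw [hLeq] at hm
    exact hm
  have hγ : γ.1.1 ∈ T ∧ γ.1.2 = σ γ.1.1 := by
    have hm : γ ∈ ({β, θ, γ} : Set NPoint) := by simp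
    rw [hLeq] at hm
    exact hm
  have key : ∀ p q : NPoint, p.1.1 ∈ T ∧ p.1.2 = σ p.1.1 → q.1.1 ∈ T ∧ q.1.2 = σ q.1.1 →
      p ≠ q → p.1.1 ≠ q.1.1 := by
    intro p q hp hq hpq hh
    apply hpq
    apply Subtype.ext
    have h2' : p.1.2 = q.1.2 := by rw [hp.2, hq.2, hh]
    exact Prod.ext hh h2'
  have hbt : β.1.1 ≠ θ.1.1 := key β θ hβ hθ hβθ
  have hbg : β.1.1 ≠ γ.1.1 := key β γ hβ hγ hβγ
  have htg : θ.1.1 ≠ γ.1.1 := key θ γ hθ hγ hθγ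
  have hs12 : β.1.2 ≠ θ.1.2 := by
    rw [hβ.2, hθ.2]
    intro hh
    exact hbt (hbij.injOn hβ.1 hθ.1 hh)
  have hs13 : β.1.2 ≠ γ.1.2 := by
    rw [hβ.2, hγ.2]
    intro hh
    exact hbg (hbij.injOn hβ.1 hγ.1 hh)
  have hs23 : θ.1.2 ≠ γ.1.2 := by
    rw [hθ.2, hγ.2]
    intro hh
    exact htg (hbij.injOn hθ.1 hγ.1 hh)
  have hTsub : ({β.1.1, θ.1.1, γ.1.1} : Set Edge) ⊆ T := by
    intro z hz
    simp only [Set.mem_insert_iff, Set.mem_singleton_iff] at hz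
    rcases hz with rfl | rfl | rfl
    exacts [hβ.1, hθ.1, hγ.1]
  have hT3 : T.ncard = 3 := by rcases hT with h | h; exacts [h.1, h.1.1]
  have hTeq : T = {β.1.1, θ.1.1, γ.1.1} := by
    symm
    apply Set.eq_of_subset_of_ncard_le hTsub _ (Set.toFinite T)
    have hc3 : ({β.1.1, θ.1.1, γ.1.1} : Set Edge).ncard = 3 :=
      Set.ncard_eq_three.mpr ⟨_, _, _, hbt, hbg, htg, rfl⟩
    rw [hT3, hc3]
  have hsb : β.1.2 ∈ perp {β.1.1, θ.1.1, γ.1.1} := by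
    rw [hβ.2, ← hTeq]
    exact hbij.mapsTo hβ.1
  have hst : θ.1.2 ∈ perp {β.1.1, θ.1.1, γ.1.1} := by
    rw [hθ.2, ← hTeq]
    exact hbij.mapsTo hθ.1
  have hsg : γ.1.2 ∈ perp {β.1.1, θ.1.1, γ.1.1} := by
    rw [hγ.2, ← hTeq]
    exact hbij.mapsTo hγ.1
  have hT' : IsFactor ({β.1.1, θ.1.1, γ.1.1} : Set Edge) ∨
      IsCompleteTriad ({β.1.1, θ.1.1, γ.1.1} : Set Edge) := hTeq ▸ hT
  rcases hα with ⟨x, rfl⟩ | ⟨u, rfl⟩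
  · obtain ⟨hne1, hx1⟩ := dist2_inP h1
    obtain ⟨hne2, hx2⟩ := dist2_inP h2
    have hx := coreP hbt hbg htg hs12 hT' hsb hst hx1 hx2
      (fun hh => hne1 hh.symm) (fun hh => hne2 hh.symm)
    exact adj_inP_inS hx.symm
  · obtain ⟨hne1, hu1⟩ := dist2_inP' h1
    obtain ⟨hne2, hu2⟩ := dist2_inP' h2
    have hu := coreP' hbt hbg htg hs12 hs13 hs23 hT' hsb hst hsg hu1 hu2
      (fun hh => hne1 hh.symm) (fun hh => hne2 hh.symm)
    exact adj_inP'_inS hu.symm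
end
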